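/- arXiv:2106.12182 — 7 statements merged into one kernel-verified Lean document; each statement's English description precedes it below -/
import Mathlib

section
/- Let A and B be disjoint groups, with A partitioned into disjoint subgroups A1 and A2. Suppose a reconstruction algorithm satisfies Representation Demographic Parity with respect to both the partition {A, B} and the partition {A1, A2, B}, i.e. q_{AA} = q_{BB} and q_{A1A1} = q_{A2A2} = q_{BB}, where q_{cc'} = Pr(x̂ ∈ c' | x* ∈ c). Then q_{A1A2} = 0 and q_{A2A1} = 0; that is, there is no confusion between A1 and A2. -/
open MeasureTheory ProbabilityTheory
open scoped ENNReal

private lemma inv_mul_eq_aux {x p q : ℝ≥0∞} (hp0 : p ≠ 0) (hpt : p ≠ ⊤)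
    (h : p⁻¹ * x = q) : x = q * p := by
  rw [← h, mul_comm p⁻¹ x, mul_assoc, ENNReal.inv_mul_cancel hp0 hpt, mul_one]

/-- If a reconstruction algorithm satisfies Representation Demographic Parity with
respect to both the partition `{A, B}` (with `A = A1 ∪ A2`) and the refined partition
`{A1, A2, B}`, and both `A1`, `A2` have positive probability under the ground truth,
then there is no confusion between `A1` and `A2`. -/
theorem rdp_two_partitions_no_confusion
    {Ω α : Type*} [MeasurableSpace Ω] [MeasurableSpace α]
    (μ : Measure Ω) [IsProbabilityMeasure μ]
    (X Xhat : Ω → α) (hX : Measurable X) (hXhat : Measurable Xhat)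
    (A1 A2 B : Set α)
    (hA1 : MeasurableSet A1) (hA2 : MeasurableSet A2) (hB : MeasurableSet B)
    (hd12 : Disjoint A1 A2) (hdAB : Disjoint (A1 ∪ A2) B)
    (h1 : μ (X ⁻¹' A1) ≠ 0) (h2 : μ (X ⁻¹' A2) ≠ 0)
    (hRDP2 : μ[Xhat ⁻¹' (A1 ∪ A2) | X ⁻¹' (A1 ∪ A2)] = μ[Xhat ⁻¹' B | X ⁻¹' B])
    (hRDP3a : μ[Xhat ⁻¹' A1 | X ⁻¹' A1] = μ[Xhat ⁻¹' B | X ⁻¹' B])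
    (hRDP3b : μ[Xhat ⁻¹' A2 | X ⁻¹' A2] = μ[Xhat ⁻¹' B | X ⁻¹' B]) :
    μ[Xhat ⁻¹' A2 | X ⁻¹' A1] = 0 ∧ μ[Xhat ⁻¹' A1 | X ⁻¹' A2] = 0 := by
  set S1 := X ⁻¹' A1 with hS1def
  set S2 := X ⁻¹' A2 with hS2def
  set T1 := Xhat ⁻¹' A1 with hT1def
  set T2 := Xhat ⁻¹' A2 with hT2def
  have hmS1 : MeasurableSet S1 := hX hA1
  have hmS2 : MeasurableSet S2 := hX hA2
  have hdS : Disjoint S1 S2 := hd12.preimage X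
  have hdT : Disjoint T1 T2 := hd12.preimage Xhat
  set q := μ[Xhat ⁻¹' B | X ⁻¹' B] with hqdef
  have hp1 : μ S1 ≠ ⊤ := (measure_lt_top μ S1).ne
  have hp2 : μ S2 ≠ ⊤ := (measure_lt_top μ S2).ne
  -- rewrite conditional probabilities
  have e1 : μ (S1 ∩ T1) = q * μ S1 := by
    have := hRDP3a
    rw [cond_apply hmS1 μ] at this
    exact inv_mul_eq_aux h1 hp1 this
  have e2 : μ (S2 ∩ T2) = q * μ S2 := by
    have := hRDP3b
    rw [cond_apply hmS2 μ] at this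
    exact inv_mul_eq_aux h2 hp2 this
  have hqtop : q ≠ ⊤ := by
    intro hq
    have : μ (S1 ∩ T1) ≤ 1 := le_trans (measure_mono Set.inter_subset_left) prob_le_one
    rw [e1, hq, ENNReal.top_mul h1] at this
    exact (by simp : ¬ (⊤ : ℝ≥0∞) ≤ 1) this
  -- the big union
  have hU : X ⁻¹' (A1 ∪ A2) = S1 ∪ S2 := by ext x; simp [hS1def, hS2def]
  have hV : Xhat ⁻¹' (A1 ∪ A2) = T1 ∪ T2 := by ext x; simp [hT1def, hT2def]
  have hmU : MeasurableSet (S1 ∪ S2) := hmS1.union hmS2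
  have hμU : μ (S1 ∪ S2) = μ S1 + μ S2 := measure_union hdS hmS2
  have hUne : μ (S1 ∪ S2) ≠ 0 := by
    rw [hμU]; simp only [ne_eq, add_eq_zero]; tauto
  have hUtop : μ (S1 ∪ S2) ≠ ⊤ := (measure_lt_top _ _).ne
  have hbig : μ ((S1 ∪ S2) ∩ (T1 ∪ T2)) = q * μ (S1 ∪ S2) := by
    have := hRDP2
    rw [hU, hV, cond_apply hmU μ] at this
    exact inv_mul_eq_aux hUne hUtop this
  -- decompose
  have hdecomp : μ ((S1 ∪ S2) ∩ (T1 ∪ T2))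
      = μ (S1 ∩ T1) + μ (S1 ∩ T2) + μ (S2 ∩ T1) + μ (S2 ∩ T2) := by
    have h12 : (S1 ∪ S2) ∩ (T1 ∪ T2) = (S1 ∩ T1 ∪ S1 ∩ T2) ∪ (S2 ∩ T1 ∪ S2 ∩ T2) := by
      rw [Set.union_inter_distrib_right, Set.inter_union_distrib_left,
        Set.inter_union_distrib_left]
    rw [h12]
    have m11 : MeasurableSet (S2 ∩ T1 ∪ S2 ∩ T2) :=
      ((hmS2.inter (hXhat hA1)).union (hmS2.inter (hXhat hA2)))
    rw [measure_union ?_ m11, measure_union ?_ (hmS1.inter (hXhat hA2)),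
      measure_union ?_ (hmS2.inter (hXhat hA2))]
    · ring
    · exact hdT.mono Set.inter_subset_right Set.inter_subset_right
    · exact hdT.mono Set.inter_subset_right Set.inter_subset_right
    · exact (hdS.mono (Set.union_subset Set.inter_subset_left Set.inter_subset_left)
        (Set.union_subset Set.inter_subset_left Set.inter_subset_left))
  have hsum0 : μ (S1 ∩ T2) + μ (S2 ∩ T1) = 0 := by
    have key : q * μ S1 + q * μ S2 + (μ (S1 ∩ T2) + μ (S2 ∩ T1))
        = q * μ S1 + q * μ S2 := by
      calc q * μ S1 + q * μ S2 + (μ (S1 ∩ T2) + μ (S2 ∩ T1))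
          = μ (S1 ∩ T1) + μ (S1 ∩ T2) + μ (S2 ∩ T1) + μ (S2 ∩ T2) := by
            rw [e1, e2]; ring
        _ = q * μ (S1 ∪ S2) := by rw [← hdecomp, hbig]
        _ = q * μ S1 + q * μ S2 := by rw [hμU, mul_add]
    have hfin : q * μ S1 + q * μ S2 ≠ ⊤ :=
      ENNReal.add_ne_top.mpr ⟨ENNReal.mul_ne_top hqtop hp1, ENNReal.mul_ne_top hqtop hp2⟩
    have := (ENNReal.add_right_inj hfin).mp (by rw [key, add_zero] : q * μ S1 + q * μ S2 + (μ (S1 ∩ T2) + μ (S2 ∩ T1)) = q * μ S1 + q * μ S2 + 0)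
    exact this
  have hz1 : μ (S1 ∩ T2) = 0 := by
    have := add_eq_zero.mp hsum0
    exact this.1
  have hz2 : μ (S2 ∩ T1) = 0 := (add_eq_zero.mp hsum0).2
  constructor
  · rw [cond_apply hmS1 μ, hz1, mul_zero]
  · rw [cond_apply hmS2 μ, hz2, mul_zero]
end

section
/- If there exists a majority class c1 with Pr(x* ∈ c1) > 1/2 > Σ_{i≠1} Pr(x* ∈ c_i), and a reconstruction algorithm satisfies Representation Demographic Parity with common accuracy α = Pr(x̂ ∈ c_i | x* ∈ c_i) < 1 for all i, then the algorithm cannot also satisfy Proportional Representation, i.e. Pr(x̂ ∈ c1) < Pr(x* ∈ c1). -/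
open MeasureTheory ProbabilityTheory
open scoped ENNReal

/-- If there is a majority class `c i1` with probability more than `1/2` (and the other
classes together have probability less than `1/2`), and the algorithm satisfies
Representation Demographic Parity with common accuracy `a < 1`, then Proportional
Representation fails for the majority class: `Pr(x̂ ∈ c i1) < Pr(x* ∈ c i1)`. -/
theorem rdp_majority_violates_pr
    {Ω α : Type*} [MeasurableSpace Ω] [MeasurableSpace α]
    (μ : Measure Ω) [IsProbabilityMeasure μ]
    (X Xhat : Ω → α) (hX : Measurable X) (hXhat : Measurable Xhat)
    {k : ℕ} (c : Fin k → Set α) (hc : ∀ i, MeasurableSet (c i))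
    (hdisj : Pairwise (Function.onFun Disjoint c)) (hcover : (⋃ i, c i) = Set.univ)
    (i1 : Fin k)
    (hmaj : (1 : ℝ≥0∞) / 2 < μ (X ⁻¹' c i1))
    (hmin : ∑ i ∈ Finset.univ.erase i1, μ (X ⁻¹' c i) < (1 : ℝ≥0∞) / 2)
    (a : ℝ≥0∞) (ha : a < 1)
    (hRDP : ∀ i, μ[Xhat ⁻¹' c i | X ⁻¹' c i] = a) :
    μ (Xhat ⁻¹' c i1) < μ (X ⁻¹' c i1) := by
  set t : Fin k → Set Ω := fun i => X ⁻¹' c i with ht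
  set s : Fin k → Set Ω := fun i => Xhat ⁻¹' c i with hs
  have hmt : ∀ i, MeasurableSet (t i) := fun i => hX (hc i)
  have hms : ∀ i, MeasurableSet (s i) := fun i => hXhat (hc i)
  have hfin : ∀ i, μ (t i) ≠ ∞ := fun i => measure_ne_top μ _
  -- key: μ (t i ∩ s i) = a * μ (t i)
  have hkey : ∀ i, μ (t i ∩ s i) = a * μ (t i) := by
    intro i
    have h := hRDP i
    rw [cond_apply (hmt i)] at h
    by_cases h0 : μ (t i) = 0
    · have : μ (t i ∩ s i) = 0 :=
        measure_mono_null Set.inter_subset_left h0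
      rw [this, h0, mul_zero]
    · calc μ (t i ∩ s i) = ((μ (t i))⁻¹ * μ (t i ∩ s i)) * μ (t i) := by
            rw [mul_comm (μ (t i))⁻¹, mul_assoc, ENNReal.inv_mul_cancel h0 (hfin i), mul_one]
        _ = a * μ (t i) := by rw [h]
  -- bound for i ≠ i1
  have hbound : ∀ i ∈ Finset.univ.erase i1, μ (t i ∩ s i1) ≤ (1 - a) * μ (t i) := by
    intro i hi
    have hne : i ≠ i1 := Finset.ne_of_mem_erase hi
    have hsub : s i1 ⊆ (s i)ᶜ := by
      intro x hx hx'
      exact (hdisj hne).le_bot ⟨hx', hx⟩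
    have h1 : μ (t i ∩ s i1) ≤ μ (t i \ s i) := by
      apply measure_mono
      intro x ⟨hxt, hxs⟩
      exact ⟨hxt, hsub hxs⟩
    have h2 : μ (t i \ s i) = μ (t i) - μ (t i ∩ s i) := by
      rw [← Set.diff_self_inter]
      exact measure_diff Set.inter_subset_left
        ((hmt i).inter (hms i)).nullMeasurableSet (measure_ne_top μ _)
    rw [h2, hkey i] at h1
    calc μ (t i ∩ s i1) ≤ μ (t i) - a * μ (t i) := h1
      _ = (1 - a) * μ (t i) := by
          rw [ENNReal.sub_mul (fun _ _ => hfin i), one_mul]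
  -- total probability: μ (s i1) = ∑ i, μ (t i ∩ s i1)
  have hcoverΩ : (⋃ i, t i) = Set.univ := by
    rw [ht]; simp only [← Set.preimage_iUnion, hcover, Set.preimage_univ]
  have hdisjt : Pairwise (Function.onFun Disjoint t) := fun i j hij =>
    (hdisj hij).preimage X
  have htotal : μ (s i1) = ∑ i, μ (t i ∩ s i1) := by
    have hd : Pairwise (Function.onFun Disjoint fun i => t i ∩ s i1) := fun i j hij =>
      (hdisjt hij).mono Set.inter_subset_left Set.inter_subset_left
    calc μ (s i1) = μ (⋃ i, t i ∩ s i1) := by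
          rw [← Set.iUnion_inter, hcoverΩ, Set.univ_inter]
      _ = ∑' i, μ (t i ∩ s i1) := measure_iUnion hd (fun i => (hmt i).inter (hms i1))
      _ = ∑ i, μ (t i ∩ s i1) := tsum_fintype _
  rw [htotal, ← Finset.add_sum_erase _ _ (Finset.mem_univ i1), hkey i1]
  have hsum : ∑ i ∈ Finset.univ.erase i1, μ (t i ∩ s i1)
      ≤ (1 - a) * ∑ i ∈ Finset.univ.erase i1, μ (t i) := by
    rw [Finset.mul_sum]
    exact Finset.sum_le_sum hbound
  have hane : (1 : ℝ≥0∞) - a ≠ 0 := by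
    simp [tsub_eq_zero_iff_le, not_le, ha]
  have hantop : (1 : ℝ≥0∞) - a ≠ ∞ := by
    exact ne_top_of_le_ne_top (by simp) tsub_le_self
  have hlt : (1 - a) * ∑ i ∈ Finset.univ.erase i1, μ (t i) < (1 - a) * μ (t i1) := by
    calc (1 - a) * ∑ i ∈ Finset.univ.erase i1, μ (t i)
        < (1 - a) * ((1:ℝ≥0∞)/2) := by
          exact ENNReal.mul_lt_mul_right hane hantop hmin
      _ < (1 - a) * μ (t i1) := ENNReal.mul_lt_mul_right hane hantop hmaj
  calc a * μ (t i1) + ∑ i ∈ Finset.univ.erase i1, μ (t i ∩ s i1)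
      ≤ a * μ (t i1) + (1 - a) * ∑ i ∈ Finset.univ.erase i1, μ (t i) :=
        add_le_add_right hsum _
    _ < a * μ (t i1) + (1 - a) * μ (t i1) := by
        exact ENNReal.add_lt_add_left (by
          exact ENNReal.mul_ne_top (ne_top_of_lt ha) (hfin i1)) hlt
    _ = μ (t i1) := by
        rw [← add_mul, add_tsub_cancel_of_le ha.le, one_mul]
end

section
/- If a reconstruction algorithm satisfies Conditional Proportional Representation with respect to sets c_i and c_j — i.e. Pr(x̂ ∈ c_i | y) = Pr(x* ∈ c_i | y) and Pr(x̂ ∈ c_j | y) = Pr(x* ∈ c_j | y) almost surely over the measurement y — and x̂ is conditionally independent of x* given y, then the algorithm satisfies Symmetric Pairwise Error: Pr(x̂ ∈ c_i, x* ∈ c_j) = Pr(x̂ ∈ c_j, x* ∈ c_i). -/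
open MeasureTheory ProbabilityTheory
open scoped ENNReal

lemma fiber_decomp {Ω Y : Type*} [MeasurableSpace Ω] [Fintype Y]
    [MeasurableSpace Y] [MeasurableSingletonClass Y]
    (μ : Measure Ω) (Ym : Ω → Y) (hY : Measurable Ym) (A : Set Ω)
    (hA : MeasurableSet A) :
    μ A = ∑ v : Y, μ (A ∩ Ym ⁻¹' {v}) := by
  have hdis : Pairwise (Function.onFun Disjoint fun v => A ∩ Ym ⁻¹' {v}) := by
    intro i j hij
    refine Set.disjoint_left.2 fun ω hi hj => hij ?_
    have h1 : Ym ω = i := hi.2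
    have h2 : Ym ω = j := hj.2
    rw [← h1, h2]
  have hmeas : ∀ v : Y, MeasurableSet (A ∩ Ym ⁻¹' {v}) :=
    fun v => hA.inter (hY (measurableSet_singleton v))
  have hun : A = ⋃ v : Y, A ∩ Ym ⁻¹' {v} := by ext ω; simp
  calc μ A = μ (⋃ v : Y, A ∩ Ym ⁻¹' {v}) := by rw [← hun]
    _ = ∑' v : Y, μ (A ∩ Ym ⁻¹' {v}) := measure_iUnion hdis hmeas
    _ = ∑ v : Y, μ (A ∩ Ym ⁻¹' {v}) := tsum_fintype _

/-- CPR implies SPE: if the reconstruction satisfies Conditional Proportional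
Representation with respect to the sets `ci` and `cj`, and `x̂` is conditionally
independent of `x*` given the measurement `y`, then the algorithm satisfies
Symmetric Pairwise Error for this pair of sets. -/
theorem cpr_implies_spe
    {Ω α Y : Type*} [MeasurableSpace Ω] [MeasurableSpace α]
    [Fintype Y] [MeasurableSpace Y] [MeasurableSingletonClass Y]
    (μ : Measure Ω) [IsProbabilityMeasure μ]
    (X Xhat : Ω → α) (Ym : Ω → Y)
    (hX : Measurable X) (hXhat : Measurable Xhat) (hY : Measurable Ym)
    (ci cj : Set α) (hci : MeasurableSet ci) (hcj : MeasurableSet cj)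
    (hCI : ∀ (v : Y) (U V : Set α), MeasurableSet U → MeasurableSet V →
      μ[Xhat ⁻¹' U ∩ X ⁻¹' V | Ym ⁻¹' {v}]
        = μ[Xhat ⁻¹' U | Ym ⁻¹' {v}] * μ[X ⁻¹' V | Ym ⁻¹' {v}])
    (hCPRi : ∀ v : Y, μ (Ym ⁻¹' {v}) ≠ 0 →
      μ[Xhat ⁻¹' ci | Ym ⁻¹' {v}] = μ[X ⁻¹' ci | Ym ⁻¹' {v}])
    (hCPRj : ∀ v : Y, μ (Ym ⁻¹' {v}) ≠ 0 →
      μ[Xhat ⁻¹' cj | Ym ⁻¹' {v}] = μ[X ⁻¹' cj | Ym ⁻¹' {v}]) :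
    μ (Xhat ⁻¹' ci ∩ X ⁻¹' cj) = μ (Xhat ⁻¹' cj ∩ X ⁻¹' ci) := by
  have hAi : MeasurableSet (Xhat ⁻¹' ci) := hXhat hci
  have hAj : MeasurableSet (Xhat ⁻¹' cj) := hXhat hcj
  have hBi : MeasurableSet (X ⁻¹' ci) := hX hci
  have hBj : MeasurableSet (X ⁻¹' cj) := hX hcj
  rw [fiber_decomp μ Ym hY _ (hAi.inter hBj),
    fiber_decomp μ Ym hY _ (hAj.inter hBi)]
  refine Finset.sum_congr rfl fun v _ => ?_
  set t := Ym ⁻¹' {v} with ht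
  have htm : MeasurableSet t := hY (measurableSet_singleton v)
  by_cases h0 : μ t = 0
  · have h1 : μ (Xhat ⁻¹' ci ∩ X ⁻¹' cj ∩ t) = 0 :=
      measure_mono_null (Set.inter_subset_right) h0
    have h2 : μ (Xhat ⁻¹' cj ∩ X ⁻¹' ci ∩ t) = 0 :=
      measure_mono_null (Set.inter_subset_right) h0
    rw [h1, h2]
  · have key : ∀ s : Set Ω, μ (s ∩ t) = μ t * μ[s|t] := by
      intro s
      rw [cond_apply htm, ← mul_assoc, ENNReal.mul_inv_cancel h0 (measure_ne_top μ t),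
        one_mul, Set.inter_comm]
    rw [key, key, hCI v ci cj hci hcj, hCI v cj ci hcj hci,
      hCPRi v h0, hCPRj v h0, mul_comm (μ[X ⁻¹' ci|t])]
end

section
/- With a finite measurable partition {c1,...,ck}, an algorithm minimizes the Representation Cross-Entropy RCE(A) = −E_{x*,y} log Pr(x̂ ∈ U(x*) | y) over all reconstruction algorithms if and only if it satisfies Conditional Proportional Representation on the partition: Q(c_i | y) = P(c_i | y) for all i, almost surely over y. -/
open scoped BigOperators

open Finset

private lemma gibbs_le {k : ℕ} (p q : Fin k → ℝ)
    (hp : ∀ i, 0 ≤ p i) (hq : ∀ i, 0 ≤ q i)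
    (hps : ∑ i, p i = 1) (hqs : ∑ i, q i = 1)
    (hsupp : ∀ i, 0 < p i → 0 < q i) :
    ∑ i, p i * Real.log (q i) ≤ ∑ i, p i * Real.log (p i) := by
  set S := Finset.univ.filter (fun i => 0 < p i) with hS
  have hmem : ∀ i ∈ S, 0 < p i := fun i hi => (Finset.mem_filter.mp hi).2
  have h1 : ∑ i, p i * Real.log (q i) - ∑ i, p i * Real.log (p i)
      = ∑ i ∈ S, p i * Real.log (q i / p i) := by
    rw [← Finset.sum_sub_distrib]
    rw [← Finset.sum_filter_of_ne (p := fun i => 0 < p i)]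
    · apply Finset.sum_congr rfl
      intro i hi
      have hpi := hmem i hi
      rw [Real.log_div (hsupp i hpi).ne' hpi.ne', mul_sub]
    · intro i _ h
      by_contra hpi
      push_neg at hpi
      have : p i = 0 := le_antisymm hpi (hp i)
      simp [this] at h
  have h2 : ∀ i ∈ S, p i * Real.log (q i / p i) ≤ q i - p i := by
    intro i hi
    have hpi := hmem i hi
    have hqi := hsupp i hpi
    have := Real.log_le_sub_one_of_pos (div_pos hqi hpi)
    calc p i * Real.log (q i / p i) ≤ p i * (q i / p i - 1) := by
          exact mul_le_mul_of_nonneg_left this hpi.le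
      _ = q i - p i := by field_simp
  have h3 : ∑ i ∈ S, (q i - p i) ≤ 0 := by
    rw [Finset.sum_sub_distrib]
    have hq1 : ∑ i ∈ S, q i ≤ 1 := by
      rw [← hqs]
      exact Finset.sum_le_sum_of_subset_of_nonneg (Finset.subset_univ S)
        (fun i _ _ => hq i)
    have hp1 : ∑ i ∈ S, p i = 1 := by
      rw [← hps]
      apply Finset.sum_subset (Finset.subset_univ S)
      intro i _ hi
      simp only [hS, Finset.mem_filter, Finset.mem_univ, true_and, not_lt] at hi
      exact le_antisymm hi (hp i)
    linarith
  have := (Finset.sum_le_sum h2).trans h3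
  linarith [h1]

private lemma gibbs_eq {k : ℕ} (p q : Fin k → ℝ)
    (hp : ∀ i, 0 ≤ p i) (hq : ∀ i, 0 ≤ q i)
    (hps : ∑ i, p i = 1) (hqs : ∑ i, q i = 1)
    (hsupp : ∀ i, 0 < p i → 0 < q i)
    (heq : ∑ i, p i * Real.log (q i) = ∑ i, p i * Real.log (p i)) :
    ∀ i, q i = p i := by
  by_contra hc
  push_neg at hc
  obtain ⟨j, hj⟩ := hc
  -- build strict inequality
  set S := Finset.univ.filter (fun i => 0 < p i) with hS
  have hmem : ∀ i ∈ S, 0 < p i := fun i hi => (Finset.mem_filter.mp hi).2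
  have h1 : ∑ i, p i * Real.log (q i) - ∑ i, p i * Real.log (p i)
      = ∑ i ∈ S, p i * Real.log (q i / p i) := by
    rw [← Finset.sum_sub_distrib]
    rw [← Finset.sum_filter_of_ne (p := fun i => 0 < p i)]
    · apply Finset.sum_congr rfl
      intro i hi
      have hpi := hmem i hi
      rw [Real.log_div (hsupp i hpi).ne' hpi.ne', mul_sub]
    · intro i _ h
      by_contra hpi
      push_neg at hpi
      have : p i = 0 := le_antisymm hpi (hp i)
      simp [this] at h
  have h2 : ∀ i ∈ S, p i * Real.log (q i / p i) ≤ q i - p i := by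
    intro i hi
    have hpi := hmem i hi
    have hqi := hsupp i hpi
    have := Real.log_le_sub_one_of_pos (div_pos hqi hpi)
    calc p i * Real.log (q i / p i) ≤ p i * (q i / p i - 1) := by
          exact mul_le_mul_of_nonneg_left this hpi.le
      _ = q i - p i := by field_simp
  have hp1 : ∑ i ∈ S, p i = 1 := by
    rw [← hps]
    apply Finset.sum_subset (Finset.subset_univ S)
    intro i _ hi
    simp only [hS, Finset.mem_filter, Finset.mem_univ, true_and, not_lt] at hi
    exact le_antisymm hi (hp i)
  by_cases hpj : 0 < p j
  · -- strict at j inside the sum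
    have hjS : j ∈ S := Finset.mem_filter.mpr ⟨Finset.mem_univ j, hpj⟩
    have hstrict : p j * Real.log (q j / p j) < q j - p j := by
      have hqj := hsupp j hpj
      have hne : q j / p j ≠ 1 := by
        intro h
        exact hj ((div_eq_one_iff_eq hpj.ne').mp h)
      have := Real.log_lt_sub_one_of_pos (div_pos hqj hpj) hne
      calc p j * Real.log (q j / p j) < p j * (q j / p j - 1) :=
            (mul_lt_mul_iff_right₀ hpj).mpr this
        _ = q j - p j := by field_simp
    have hlt : ∑ i ∈ S, p i * Real.log (q i / p i) < ∑ i ∈ S, (q i - p i) :=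
      Finset.sum_lt_sum h2 ⟨j, hjS, hstrict⟩
    have h3 : ∑ i ∈ S, (q i - p i) ≤ 0 := by
      rw [Finset.sum_sub_distrib, hp1]
      have hq1 : ∑ i ∈ S, q i ≤ 1 := by
        rw [← hqs]
        exact Finset.sum_le_sum_of_subset_of_nonneg (Finset.subset_univ S)
          (fun i _ _ => hq i)
      linarith
    rw [heq] at h1
    simp at h1
    linarith
  · -- p j = 0, q j > 0
    push_neg at hpj
    have hpj0 : p j = 0 := le_antisymm hpj (hp j)
    have hqj : 0 < q j := lt_of_le_of_ne (hq j) (fun h => hj (by rw [hpj0, ← h]))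
    have hjS : j ∉ S := by simp [hS, hpj0]
    have hq1 : ∑ i ∈ S, q i ≤ 1 - q j := by
      have hsub : S ⊆ Finset.univ.erase j := by
        intro i hi
        exact Finset.mem_erase.mpr ⟨fun h => hjS (h ▸ hi), Finset.mem_univ i⟩
      have := Finset.sum_le_sum_of_subset_of_nonneg hsub (fun i _ _ => hq i)
      have h4 := Finset.add_sum_erase Finset.univ q (Finset.mem_univ j)
      rw [hqs] at h4
      linarith
    have h3 : ∑ i ∈ S, (q i - p i) < 0 := by
      rw [Finset.sum_sub_distrib, hp1]
      linarith
    have := (Finset.sum_le_sum h2).trans_lt h3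
    rw [heq] at h1
    simp at h1
    linarith


/-- An algorithm (with conditional output law `Q(·|y)`) minimizes the Representation
Cross-Entropy over all reconstruction algorithms if and only if it satisfies
Conditional Proportional Representation on the partition, i.e. `Q(c_i|y) = P(c_i|y)`
for all `i`, for every measurement value `y` of positive probability. -/
theorem rce_minimizer_iff_cpr
    {k : ℕ} {Y : Type*} [Fintype Y]
    (py : Y → ℝ) (hpy : ∀ v, 0 ≤ py v) (hpysum : ∑ v, py v = 1)
    (P : Fin k → Y → ℝ)
    (hPnn : ∀ i v, 0 ≤ P i v) (hPsum : ∀ v, ∑ i, P i v = 1)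
    (Q : Fin k → Y → ℝ)
    (hQnn : ∀ i v, 0 ≤ Q i v) (hQsum : ∀ v, ∑ i, Q i v = 1)
    (hQpos : ∀ i v, 0 < P i v → 0 < Q i v)
    (RCE : (Fin k → Y → ℝ) → ℝ)
    (hRCE : ∀ R, RCE R = -∑ v, py v * ∑ i, P i v * Real.log (R i v)) :
    (∀ R : Fin k → Y → ℝ, (∀ i v, 0 ≤ R i v) → (∀ v, ∑ i, R i v = 1) →
        (∀ i v, 0 < P i v → 0 < R i v) → RCE Q ≤ RCE R)
      ↔ (∀ v, 0 < py v → ∀ i, Q i v = P i v) := by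
  constructor
  · intro hmin v hv
    -- use R = P
    have hP : RCE Q ≤ RCE P :=
      hmin P (fun i v => hPnn i v) hPsum (fun i v h => h)
    rw [hRCE Q, hRCE P] at hP
    have hle : ∑ v, py v * ∑ i, P i v * Real.log (P i v)
        ≤ ∑ v, py v * ∑ i, P i v * Real.log (Q i v) := by linarith
    -- termwise inequality the other way
    have hterm : ∀ w : Y, py w * ∑ i, P i w * Real.log (Q i w)
        ≤ py w * ∑ i, P i w * Real.log (P i w) := by
      intro w
      apply mul_le_mul_of_nonneg_left _ (hpy w)
      exact gibbs_le (fun i => P i w) (fun i => Q i w)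
        (fun i => hPnn i w) (fun i => hQnn i w) (hPsum w) (hQsum w)
        (fun i => hQpos i w)
    have hsum_eq : ∀ w : Y, py w * ∑ i, P i w * Real.log (Q i w)
        = py w * ∑ i, P i w * Real.log (P i w) := by
      have h := (Finset.sum_eq_sum_iff_of_le (fun w _ => hterm w)).mp
        (le_antisymm (Finset.sum_le_sum (fun w _ => hterm w)) hle)
      exact fun w => h w (Finset.mem_univ w)
    have := hsum_eq v
    have heq : ∑ i, P i v * Real.log (Q i v) = ∑ i, P i v * Real.log (P i v) :=
      mul_left_cancel₀ hv.ne' this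
    exact gibbs_eq (fun i => P i v) (fun i => Q i v)
      (fun i => hPnn i v) (fun i => hQnn i v) (hPsum v) (hQsum v)
      (fun i => hQpos i v) heq
  · intro hcpr R hRnn hRsum hRpos
    rw [hRCE Q, hRCE R]
    have : ∑ v, py v * ∑ i, P i v * Real.log (R i v)
        ≤ ∑ v, py v * ∑ i, P i v * Real.log (Q i v) := by
      apply Finset.sum_le_sum
      intro v _
      rcases eq_or_lt_of_le (hpy v) with h | h
      · rw [← h]; simp
      · apply mul_le_mul_of_nonneg_left _ (hpy v)
        have hQP : ∀ i, Q i v = P i v := hcpr v h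
        have h1 : ∑ i, P i v * Real.log (R i v) ≤ ∑ i, P i v * Real.log (P i v) :=
          gibbs_le (fun i => P i v) (fun i => R i v)
            (fun i => hPnn i v) (fun i => hRnn i v) (hPsum v) (hRsum v)
            (fun i => hRpos i v)
        calc ∑ i, P i v * Real.log (R i v) ≤ ∑ i, P i v * Real.log (P i v) := h1
          _ = ∑ i, P i v * Real.log (Q i v) := by
            apply Finset.sum_congr rfl; intro i _; rw [hQP i]
    linarith
end

section
/- For discrete distributions over a finite set of classes [k], define for weights λ ∈ Δ_{k-1} (the probability simplex with positive entries) the reweighted accuracies α_i(λ) = E_{y | x*∈c_i}[ λ_i P(x*∈c_i|y) / Σ_j λ_j P(x*∈c_j|y) ]. If λ* minimizes f(λ) = max_i α_i(λ) / min_j α_j(λ) over the compact set T = {λ : Σλ_i = 1, α_i(λ) ≥ ε ∀i} (where ε = min_i α_i at uniform weights), and f(λ*) = r > 1, then multiplying λ*_i by r^{1/4} for all i in S = {i : α_i(λ*) ≤ √r · min_j α_j(λ*)} (and renormalizing) yields λ' ∈ T with f(λ') < r. Consequently, min over T of f equals 1, i.e. there exist positive weights λ with Σλ_i = 1 such that all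 α_i(λ) are equal — posterior sampling on the λ-reweighted distribution satisfies Representation Demographic Parity. -/
open scoped BigOperators

set_option maxHeartbeats 1000000 in
lemma rdp_aux1 {k : ℕ} (hk : 0 < k) {Y : Type*} [Fintype Y]
    (L : Fin k → Y → ℝ)
    (hL : ∀ i v, 0 < L i v) (hYne : (Finset.univ : Finset Y).Nonempty)
    (Post : Fin k → Y → ℝ) (hPostpos : ∀ i v, 0 < Post i v)
    (acc : (Fin k → ℝ) → Fin k → ℝ)
    (hacc : ∀ lam i, acc lam i
      = ∑ v, L i v * (lam i * Post i v / ∑ j, lam j * Post j v))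
    (eps : ℝ)
    (T : Set (Fin k → ℝ))
    (hT : T = {lam | (∀ i, 0 < lam i) ∧ (∑ i, lam i = 1) ∧ ∀ i, eps ≤ acc lam i})
    (f : (Fin k → ℝ) → ℝ)
    (hf : ∀ lam, f lam
      = Finset.univ.sup' ⟨⟨0, hk⟩, Finset.mem_univ _⟩ (acc lam)
        / Finset.univ.inf' ⟨⟨0, hk⟩, Finset.mem_univ _⟩ (acc lam)) :
    ∀ lamstar ∈ T, 1 < f lamstar →
      ∀ g : Fin k → ℝ,
        g = (fun i => if acc lamstar i ≤ Real.sqrt (f lamstar) *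
              Finset.univ.inf' ⟨⟨0, hk⟩, Finset.mem_univ _⟩ (acc lamstar)
            then f lamstar ^ ((1 : ℝ) / 4) * lamstar i else lamstar i) →
        (fun i => g i / ∑ j, g j) ∈ T ∧ f (fun i => g i / ∑ j, g j) < f lamstar := by
  have hkne : (Finset.univ : Finset (Fin k)).Nonempty := ⟨⟨0, hk⟩, Finset.mem_univ _⟩
  have hDpos : ∀ (lam : Fin k → ℝ), (∀ i, 0 < lam i) → ∀ v, 0 < ∑ j, lam j * Post j v :=
    fun lam hlam v => Finset.sum_pos (fun j _ => mul_pos (hlam j) (hPostpos j v)) hkne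
  have haccpos : ∀ (lam : Fin k → ℝ), (∀ i, 0 < lam i) → ∀ i, 0 < acc lam i := by
    intro lam hlam i
    rw [hacc]
    exact Finset.sum_pos (fun v _ => by
      have := hDpos lam hlam v
      have := hL i v
      have := hPostpos i v
      have := hlam i
      positivity) hYne
  have hscale : ∀ (g : Fin k → ℝ), (∀ i, 0 < g i) → ∀ i,
      acc (fun i => g i / ∑ j, g j) i = acc g i := by
    intro g hg i
    have hs : 0 < ∑ j, g j := Finset.sum_pos (fun j _ => hg j) hkne
    rw [hacc, hacc]
    refine Finset.sum_congr rfl fun v _ => ?_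
    have hD : 0 < ∑ j, g j * Post j v := Finset.sum_pos (fun j _ => mul_pos (hg j) (hPostpos j v)) hkne
    have hsum : ∑ j, g j / (∑ l, g l) * Post j v = (∑ j, g j * Post j v) / ∑ l, g l := by
      rw [Finset.sum_div]
      exact Finset.sum_congr rfl fun j _ => by ring
    rw [hsum]
    congr 1
    field_simp
  intro lam hmem hr g hgdef
  rw [hT] at hmem
  obtain ⟨hpos, hsum1, hge⟩ := hmem
  set r := f lam with hrdef
  set m := Finset.univ.inf' hkne (acc lam) with hmdef
  set M := Finset.univ.sup' hkne (acc lam) with hMdef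
  have hmle : ∀ i, m ≤ acc lam i := fun i => Finset.inf'_le _ (Finset.mem_univ i)
  have hleM : ∀ i, acc lam i ≤ M := fun i => Finset.le_sup' _ (Finset.mem_univ i)
  have hmpos : 0 < m := by
    rw [hmdef, Finset.lt_inf'_iff]
    exact fun i _ => haccpos lam hpos i
  have hrpos : (0:ℝ) < r := by linarith
  have hMrm : M = r * m := by
    have h1 : r = M / m := hf lam
    field_simp at h1
    linarith
  set ρ := r ^ ((1:ℝ)/4) with hρdef
  have hρ1 : 1 < ρ := Real.one_lt_rpow_iff_of_pos hrpos |>.2 (Or.inl ⟨hr, by norm_num⟩)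
  have hρpos : 0 < ρ := by linarith
  set s := Real.sqrt r with hsdef
  have hs1 : 1 < s := by
    rw [hsdef, show (1:ℝ) = Real.sqrt 1 by simp]
    exact Real.sqrt_lt_sqrt (by norm_num) hr
  have hρρ : ρ * ρ = s := by
    rw [hρdef, hsdef, ← Real.rpow_add hrpos, Real.sqrt_eq_rpow]
    norm_num
  have hss : s * s = r := Real.mul_self_sqrt (le_of_lt hrpos)
  -- g values
  have hgval : ∀ i, g i = if acc lam i ≤ s * m then ρ * lam i else lam i := by
    intro i; rw [hgdef]
  have hgpos : ∀ i, 0 < g i := by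
    intro i; rw [hgval]
    split
    · exact mul_pos hρpos (hpos i)
    · exact hpos i
  have hglb : ∀ i, lam i ≤ g i := by
    intro i; rw [hgval]; split
    · nlinarith [hpos i]
    · exact le_refl _
  have hgub : ∀ i, g i ≤ ρ * lam i := by
    intro i; rw [hgval]; split
    · exact le_refl _
    · nlinarith [hpos i]
  -- S is nonempty: the argmin is in S
  obtain ⟨i1, -, hi1⟩ := Finset.exists_mem_eq_inf' hkne (acc lam)
  have hi1S : acc lam i1 ≤ s * m := by
    rw [← hi1]; nlinarith
  -- S is not everything
  have hnotall : ∃ i0, ¬ (acc lam i0 ≤ s * m) := by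
    by_contra h
    push_neg at h
    have hM' : M ≤ s * m := Finset.sup'_le _ _ (fun i _ => h i)
    nlinarith
  have hεm : eps ≤ m := Finset.le_inf' _ _ fun i _ => hge i
  clear_value r m M ρ s
  -- denominator comparisons
  have hDg : ∀ v, 0 < ∑ j, g j * Post j v := hDpos g hgpos
  have hDl : ∀ v, 0 < ∑ j, lam j * Post j v := hDpos lam hpos
  have hD1 : ∀ v, (∑ j, lam j * Post j v) < ∑ j, g j * Post j v := by
    intro v
    refine Finset.sum_lt_sum (fun j _ => mul_le_mul_of_nonneg_right (hglb j) (le_of_lt (hPostpos j v))) ⟨i1, Finset.mem_univ _, ?_⟩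
    have : lam i1 < g i1 := by
      rw [hgval]; rw [if_pos hi1S]; nlinarith [hpos i1]
    exact mul_lt_mul_of_pos_right this (hPostpos i1 v)
  have hD2 : ∀ v, (∑ j, g j * Post j v) ≤ ρ * ∑ j, lam j * Post j v := by
    intro v
    rw [Finset.mul_sum]
    exact Finset.sum_le_sum fun j _ => by
      rw [← mul_assoc]
      exact mul_le_mul_of_nonneg_right (hgub j) (le_of_lt (hPostpos j v))
  -- bounds on acc g
  have hub_in : ∀ i, acc lam i ≤ s * m → acc g i ≤ ρ * acc lam i := by
    intro i hi
    have hgi : g i = ρ * lam i := by rw [hgval, if_pos hi]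
    rw [hacc g i, hacc lam i, Finset.mul_sum]
    refine Finset.sum_le_sum fun v _ => ?_
    have key : g i * Post i v / (∑ j, g j * Post j v)
        ≤ ρ * (lam i * Post i v / (∑ j, lam j * Post j v)) := by
      rw [hgi, ← mul_div_assoc, div_le_div_iff₀ (hDg v) (hDl v)]
      nlinarith [hD1 v, mul_pos (mul_pos hρpos (hpos i)) (hPostpos i v)]
    calc L i v * (g i * Post i v / ∑ j, g j * Post j v)
        ≤ L i v * (ρ * (lam i * Post i v / ∑ j, lam j * Post j v)) :=
          mul_le_mul_of_nonneg_left key (le_of_lt (hL i v))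
      _ = ρ * (L i v * (lam i * Post i v / ∑ j, lam j * Post j v)) := by ring
  have hlb_in : ∀ i, acc lam i ≤ s * m → acc lam i ≤ acc g i := by
    intro i hi
    have hgi : g i = ρ * lam i := by rw [hgval, if_pos hi]
    rw [hacc g i, hacc lam i]
    refine Finset.sum_le_sum fun v _ => ?_
    refine mul_le_mul_of_nonneg_left ?_ (le_of_lt (hL i v))
    rw [hgi, div_le_div_iff₀ (hDl v) (hDg v)]
    nlinarith [hD2 v, mul_pos (hpos i) (hPostpos i v)]
  have hub_out : ∀ i, ¬ (acc lam i ≤ s * m) → acc g i < acc lam i := by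
    intro i hi
    have hgi : g i = lam i := by rw [hgval, if_neg hi]
    rw [hacc g i, hacc lam i]
    refine Finset.sum_lt_sum_of_nonempty hYne fun v _ => ?_
    refine mul_lt_mul_of_pos_left ?_ (hL i v)
    rw [hgi, div_lt_div_iff₀ (hDg v) (hDl v)]
    nlinarith [hD1 v, mul_pos (hpos i) (hPostpos i v)]
  have hlb_out : ∀ i, ¬ (acc lam i ≤ s * m) → acc lam i ≤ ρ * acc g i := by
    intro i hi
    have hgi : g i = lam i := by rw [hgval, if_neg hi]
    rw [hacc g i, hacc lam i, Finset.mul_sum]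
    refine Finset.sum_le_sum fun v _ => ?_
    have key : lam i * Post i v / (∑ j, lam j * Post j v)
        ≤ ρ * (g i * Post i v / (∑ j, g j * Post j v)) := by
      rw [hgi, ← mul_div_assoc, div_le_div_iff₀ (hDl v) (hDg v)]
      nlinarith [hD2 v, mul_pos (hpos i) (hPostpos i v)]
    calc L i v * (lam i * Post i v / ∑ j, lam j * Post j v)
        ≤ L i v * (ρ * (g i * Post i v / ∑ j, g j * Post j v)) :=
          mul_le_mul_of_nonneg_left key (le_of_lt (hL i v))
      _ = ρ * (L i v * (g i * Post i v / ∑ j, g j * Post j v)) := by ring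

  -- conclusion
  set m' := Finset.univ.inf' hkne (acc g) with hm'def
  have hm'le : ∀ i, m' ≤ acc g i := fun i => Finset.inf'_le _ (Finset.mem_univ i)
  have hmm' : m ≤ m' := by
    refine Finset.le_inf' _ _ fun i _ => ?_
    by_cases hi : acc lam i ≤ s * m
    · exact le_trans (hmle i) (hlb_in i hi)
    · have h1 := hlb_out i hi
      push_neg at hi
      nlinarith [hρρ, hmpos, hρ1, hρpos, mul_pos hρpos hmpos]
  have hm'pos : 0 < m' := lt_of_lt_of_le hmpos hmm'
  have hrm : r * m ≤ r * m' := by nlinarith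
  have hub' : ∀ i, acc g i < r * m' := by
    intro i
    by_cases hi : acc lam i ≤ s * m
    · have h1 := hub_in i hi
      calc acc g i ≤ ρ * acc lam i := h1
        _ ≤ ρ * (s * m) := by nlinarith [hρpos]
        _ = ρ * ρ * ρ * m := by rw [← hρρ]; ring
        _ < ρ * ρ * (ρ * ρ) * m := by
            nlinarith [mul_pos (mul_pos (mul_pos hρpos hρpos) hρpos) hmpos, hρ1]
        _ = r * m := by rw [← hss, ← hρρ]
        _ ≤ r * m' := hrm
    · have h1 := hub_out i hi
      have h2 := hleM i
      calc acc g i < acc lam i := h1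
        _ ≤ M := h2
        _ = r * m := hMrm
        _ ≤ r * m' := hrm
  have hsg : 0 < ∑ j, g j := Finset.sum_pos (fun j _ => hgpos j) hkne
  constructor
  · rw [hT]
    refine ⟨fun i => div_pos (hgpos i) hsg,
      by rw [← Finset.sum_div]; exact div_self (ne_of_gt hsg), fun i => ?_⟩
    rw [hscale g hgpos i]
    linarith [hm'le i]
  · have hfe : f (fun i => g i / ∑ j, g j)
        = Finset.univ.sup' hkne (acc (fun i => g i / ∑ j, g j))
          / Finset.univ.inf' hkne (acc (fun i => g i / ∑ j, g j)) := hf _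
    have hsup_eq : Finset.univ.sup' hkne (acc (fun i => g i / ∑ j, g j))
        = Finset.univ.sup' hkne (acc g) :=
      Finset.sup'_congr hkne rfl (fun i _ => hscale g hgpos i)
    have hinf_eq : Finset.univ.inf' hkne (acc (fun i => g i / ∑ j, g j))
        = m' :=
      Finset.inf'_congr hkne rfl (fun i _ => hscale g hgpos i)
    rw [hfe, hsup_eq, hinf_eq, div_lt_iff₀ hm'pos]
    exact (Finset.sup'_lt_iff hkne).mpr fun i _ => hub' i

set_option maxHeartbeats 1000000 in
lemma rdp_aux2 {k : ℕ} (hk : 0 < k) {Y : Type*} [Fintype Y]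
    (L : Fin k → Y → ℝ)
    (hL : ∀ i v, 0 < L i v) (hYne : (Finset.univ : Finset Y).Nonempty)
    (Post : Fin k → Y → ℝ) (hPostpos : ∀ i v, 0 < Post i v)
    (acc : (Fin k → ℝ) → Fin k → ℝ)
    (hacc : ∀ lam i, acc lam i
      = ∑ v, L i v * (lam i * Post i v / ∑ j, lam j * Post j v))
    (eps : ℝ)
    (heps : eps = Finset.univ.inf' ⟨⟨0, hk⟩, Finset.mem_univ _⟩
      (acc fun _ => (1 : ℝ) / k))
    (T : Set (Fin k → ℝ))
    (hT : T = {lam | (∀ i, 0 < lam i) ∧ (∑ i, lam i = 1) ∧ ∀ i, eps ≤ acc lam i})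
    (f : (Fin k → ℝ) → ℝ)
    (hf : ∀ lam, f lam
      = Finset.univ.sup' ⟨⟨0, hk⟩, Finset.mem_univ _⟩ (acc lam)
        / Finset.univ.inf' ⟨⟨0, hk⟩, Finset.mem_univ _⟩ (acc lam))
    (hpart1 : ∀ lamstar ∈ T, 1 < f lamstar →
      ∀ g : Fin k → ℝ,
        g = (fun i => if acc lamstar i ≤ Real.sqrt (f lamstar) *
              Finset.univ.inf' ⟨⟨0, hk⟩, Finset.mem_univ _⟩ (acc lamstar)
            then f lamstar ^ ((1 : ℝ) / 4) * lamstar i else lamstar i) →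
        (fun i => g i / ∑ j, g j) ∈ T ∧ f (fun i => g i / ∑ j, g j) < f lamstar) :
    ∃ lam : Fin k → ℝ, (∀ i, 0 < lam i) ∧ (∑ i, lam i = 1) ∧
        ∀ i j, acc lam i = acc lam j := by
  have hkne : (Finset.univ : Finset (Fin k)).Nonempty := ⟨⟨0, hk⟩, Finset.mem_univ _⟩
  have hDpos : ∀ (lam : Fin k → ℝ), (∀ i, 0 < lam i) → ∀ v, 0 < ∑ j, lam j * Post j v :=
    fun lam hlam v => Finset.sum_pos (fun j _ => mul_pos (hlam j) (hPostpos j v)) hkne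
  have haccpos : ∀ (lam : Fin k → ℝ), (∀ i, 0 < lam i) → ∀ i, 0 < acc lam i := by
    intro lam hlam i
    rw [hacc]
    exact Finset.sum_pos (fun v _ => by
      have := hDpos lam hlam v
      have := hL i v
      have := hPostpos i v
      have := hlam i
      positivity) hYne
  -- uniform weights
  set u : Fin k → ℝ := fun _ => (1 : ℝ) / k with hudef
  have hupos : ∀ i, 0 < u i := fun i => by
    rw [hudef]; positivity
  have husum : ∑ i, u i = 1 := by
    rw [hudef]
    rw [Finset.sum_const, Finset.card_univ, Fintype.card_fin, nsmul_eq_mul]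
    field_simp
  have hepspos : 0 < eps := by
    rw [heps]; refine (Finset.lt_inf'_iff _).2 ?_
    exact fun i _ => haccpos u hupos i
  have huT : u ∈ T := by
    rw [hT]
    exact ⟨hupos, husum, fun i => heps ▸ Finset.inf'_le _ (Finset.mem_univ i)⟩
  -- lower bound on Post
  have i0 : Fin k := ⟨0, hk⟩
  obtain ⟨v0, -⟩ := id hYne
  have hPY : (Finset.univ : Finset (Fin k × Y)).Nonempty := ⟨(i0, v0), Finset.mem_univ _⟩
  set c : ℝ := Finset.univ.inf' hPY (fun p : Fin k × Y => Post p.1 p.2) with hcdef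
  have hcpos : 0 < c := by
    rw [hcdef, Finset.lt_inf'_iff]
    exact fun p _ => hPostpos p.1 p.2
  have hcle : ∀ j v, c ≤ Post j v := fun j v =>
    hcdef ▸ Finset.inf'_le _ (Finset.mem_univ (j, v))
  -- surrogate continuous accuracy
  set acc' : (Fin k → ℝ) → Fin k → ℝ :=
    fun lam i => ∑ v, L i v * (lam i * Post i v / max (∑ j, lam j * Post j v) c)
    with hacc'def
  have hmaxpos : ∀ (lam : Fin k → ℝ) v, 0 < max (∑ j, lam j * Post j v) c :=
    fun lam v => lt_of_lt_of_le hcpos (le_max_right _ _)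
  have hacc'cont : ∀ i, Continuous (fun lam => acc' lam i) := by
    intro i
    rw [hacc'def]
    refine continuous_finset_sum _ fun v _ => ?_
    refine Continuous.mul continuous_const ?_
    refine Continuous.div ((continuous_apply i).mul continuous_const) ?_
      (fun lam => ne_of_gt (hmaxpos lam v))
    exact Continuous.max (continuous_finset_sum _ fun j _ =>
      (continuous_apply j).mul continuous_const) continuous_const
  -- on the simplex, acc' = acc
  have hDc : ∀ (lam : Fin k → ℝ), (∀ i, 0 ≤ lam i) → (∑ i, lam i = 1) →
      ∀ v, c ≤ ∑ j, lam j * Post j v := by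
    intro lam hnn hsum v
    calc c = ∑ j, lam j * c := by
          rw [← Finset.sum_mul, hsum, one_mul]
      _ ≤ ∑ j, lam j * Post j v :=
          Finset.sum_le_sum fun j _ => mul_le_mul_of_nonneg_left (hcle j v) (hnn j)
  have hacc'eq : ∀ (lam : Fin k → ℝ), (∀ i, 0 ≤ lam i) → (∑ i, lam i = 1) →
      ∀ i, acc' lam i = acc lam i := by
    intro lam hnn hsum i
    rw [hacc'def, hacc]
    exact Finset.sum_congr rfl fun v _ => by
      rw [max_eq_left (hDc lam hnn hsum v)]
  -- the compact set K
  set K : Set (Fin k → ℝ) :=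
    {lam | (∀ i, 0 ≤ lam i) ∧ (∑ i, lam i = 1) ∧ ∀ i, eps ≤ acc' lam i} with hKdef
  have hKT : K = T := by
    rw [hKdef, hT]
    ext lam
    simp only [Set.mem_setOf_eq]
    constructor
    · rintro ⟨hnn, hsum, hge⟩
      have hpos : ∀ i, 0 < lam i := by
        intro i
        rcases lt_or_eq_of_le (hnn i) with h | h
        · exact h
        · exfalso
          have h0 : acc lam i = 0 := by
            rw [hacc]
            refine Finset.sum_eq_zero fun v _ => ?_
            rw [← h, zero_mul, zero_div, mul_zero]
          have := hge i
          rw [hacc'eq lam hnn hsum i, h0] at this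
          linarith
      exact ⟨hpos, hsum, fun i => by rw [← hacc'eq lam hnn hsum i]; exact hge i⟩
    · rintro ⟨hpos, hsum, hge⟩
      have hnn : ∀ i, 0 ≤ lam i := fun i => le_of_lt (hpos i)
      exact ⟨hnn, hsum, fun i => by rw [hacc'eq lam hnn hsum i]; exact hge i⟩
  have hKclosed : IsClosed K := by
    rw [hKdef]
    have h1 : IsClosed {lam : Fin k → ℝ | ∀ i, 0 ≤ lam i} := by
      have : {lam : Fin k → ℝ | ∀ i, 0 ≤ lam i} = ⋂ i, {lam | 0 ≤ lam i} := by
        ext lam; simp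
      rw [this]
      exact isClosed_iInter fun i => isClosed_le continuous_const (continuous_apply i)
    have h2 : IsClosed {lam : Fin k → ℝ | ∑ i, lam i = 1} :=
      isClosed_eq (continuous_finset_sum _ fun i _ => continuous_apply i) continuous_const
    have h3 : IsClosed {lam : Fin k → ℝ | ∀ i, eps ≤ acc' lam i} := by
      have : {lam : Fin k → ℝ | ∀ i, eps ≤ acc' lam i} = ⋂ i, {lam | eps ≤ acc' lam i} := by
        ext lam; simp
      rw [this]
      exact isClosed_iInter fun i => isClosed_le continuous_const (hacc'cont i)
    have : {lam : Fin k → ℝ | (∀ i, 0 ≤ lam i) ∧ (∑ i, lam i = 1) ∧ ∀ i, eps ≤ acc' lam i}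
        = {lam | ∀ i, 0 ≤ lam i} ∩ ({lam | ∑ i, lam i = 1} ∩ {lam | ∀ i, eps ≤ acc' lam i}) := by
      ext lam; simp [Set.mem_setOf_eq, Set.mem_inter_iff, and_assoc]
    rw [this]
    exact h1.inter (h2.inter h3)
  have hKsub : K ⊆ Set.Icc (fun _ => (0:ℝ)) (fun _ => (1:ℝ)) := by
    rintro lam ⟨hnn, hsum, -⟩
    constructor
    · intro i; exact hnn i
    · intro i
      calc lam i ≤ ∑ j, lam j :=
            Finset.single_le_sum (fun j _ => hnn j) (Finset.mem_univ i)
        _ = 1 := hsum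
  have hKcompact : IsCompact K :=
    IsCompact.of_isClosed_subset (isCompact_Icc) hKclosed hKsub
  have hKne : K.Nonempty := ⟨u, by rw [hKT]; exact huT⟩
  -- continuity of f on K
  have hsupcont : Continuous fun lam => Finset.univ.sup' hkne (acc' lam) :=
    Continuous.finset_sup'_apply hkne fun i _ => hacc'cont i
  have hinfcont : Continuous fun lam => Finset.univ.inf' hkne (acc' lam) :=
    Continuous.finset_inf'_apply hkne fun i _ => hacc'cont i
  have hfcont : ContinuousOn f K := by
    have hF : ContinuousOn (fun lam => Finset.univ.sup' hkne (acc' lam)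
        / Finset.univ.inf' hkne (acc' lam)) K := by
      refine ContinuousOn.div hsupcont.continuousOn hinfcont.continuousOn ?_
      rintro lam ⟨hnn, hsum, hge⟩
      have : eps ≤ Finset.univ.inf' hkne (acc' lam) :=
        Finset.le_inf' _ _ fun i _ => hge i
      linarith
    refine ContinuousOn.congr hF ?_
    rintro lam hmem
    obtain ⟨hnn, hsum, -⟩ := hmem
    show f lam = Finset.univ.sup' hkne (acc' lam) / Finset.univ.inf' hkne (acc' lam)
    have heq : ∀ i, acc' lam i = acc lam i := hacc'eq lam hnn hsum
    have h1 : f lam = Finset.univ.sup' hkne (acc lam) / Finset.univ.inf' hkne (acc lam) := hf lam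
    rw [h1, Finset.sup'_congr hkne rfl (fun i _ => heq i),
      Finset.inf'_congr hkne rfl (fun i _ => heq i)]
  -- extract minimizer
  obtain ⟨lam, hlamK, hmin⟩ := hKcompact.exists_isMinOn hKne hfcont
  have hlamT : lam ∈ T := hKT ▸ hlamK
  have hmin' : ∀ x ∈ T, f lam ≤ f x := fun x hx => hmin (hKT ▸ hx : x ∈ K)
  obtain ⟨hpos, hsum, hge⟩ : (∀ i, 0 < lam i) ∧ (∑ i, lam i = 1) ∧ ∀ i, eps ≤ acc lam i := by
    rw [hT] at hlamT; exact hlamT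
  -- f lam ≥ 1
  have hmpos : 0 < Finset.univ.inf' hkne (acc lam) := by
    rw [Finset.lt_inf'_iff]
    exact fun i _ => haccpos lam hpos i
  have hinfsup : Finset.univ.inf' hkne (acc lam) ≤ Finset.univ.sup' hkne (acc lam) :=
    le_trans (Finset.inf'_le _ (Finset.mem_univ i0)) (Finset.le_sup' _ (Finset.mem_univ i0))
  have hflam : f lam = Finset.univ.sup' hkne (acc lam) / Finset.univ.inf' hkne (acc lam) := hf lam
  have hge1 : 1 ≤ f lam := by
    rw [hflam]
    rw [le_div_iff₀ hmpos, one_mul]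
    exact hinfsup
  have hle1 : f lam ≤ 1 := by
    by_contra h
    push_neg at h
    obtain ⟨hmem', hlt⟩ := hpart1 lam hlamT h _ rfl
    exact absurd (hmin' _ hmem') (not_le.mpr hlt)
  have hfeq : f lam = 1 := le_antisymm hle1 hge1
  have heq : Finset.univ.sup' hkne (acc lam) = Finset.univ.inf' hkne (acc lam) := by
    rw [hflam] at hfeq
    field_simp at hfeq
    linarith
  refine ⟨lam, hpos, hsum, fun i j => ?_⟩
  have h1 : acc lam i ≤ Finset.univ.sup' hkne (acc lam) := Finset.le_sup' _ (Finset.mem_univ i)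
  have h2 : Finset.univ.inf' hkne (acc lam) ≤ acc lam j := Finset.inf'_le _ (Finset.mem_univ j)
  have h3 : acc lam j ≤ Finset.univ.sup' hkne (acc lam) := Finset.le_sup' _ (Finset.mem_univ j)
  have h4 : Finset.univ.inf' hkne (acc lam) ≤ acc lam i := Finset.inf'_le _ (Finset.mem_univ i)
  linarith [heq]

/-- Reweighting achieves RDP. With reweighted accuracies
`α_i(λ) = E_{y|x*∈c_i}[λ_i P(c_i|y) / Σ_j λ_j P(c_j|y)]`, if `λ*` minimizes
`f(λ) = max_i α_i(λ) / min_j α_j(λ)` over `T = {λ : Σλ = 1, α_i(λ) ≥ ε}` with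
`f(λ*) = r > 1`, then scaling `λ*_i` by `r^{1/4}` on `S = {i : α_i(λ*) ≤ √r·min_j α_j(λ*)}`
and renormalizing gives `λ' ∈ T` with `f(λ') < r`. Consequently there exist positive
weights `λ` summing to `1` for which all the `α_i(λ)` are equal: posterior sampling on
the `λ`-reweighted distribution satisfies Representation Demographic Parity. -/
theorem reweighted_posterior_sampling_rdp
    {k : ℕ} (hk : 0 < k) {Y : Type*} [Fintype Y]
    (L : Fin k → Y → ℝ) (pri : Fin k → ℝ)
    (hL : ∀ i v, 0 < L i v) (hLsum : ∀ i, ∑ v, L i v = 1)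
    (hpri : ∀ i, 0 < pri i) (hprisum : ∑ i, pri i = 1)
    (Post : Fin k → Y → ℝ)
    (hPost : ∀ i v, Post i v = pri i * L i v / ∑ j, pri j * L j v)
    (acc : (Fin k → ℝ) → Fin k → ℝ)
    (hacc : ∀ lam i, acc lam i
      = ∑ v, L i v * (lam i * Post i v / ∑ j, lam j * Post j v))
    (eps : ℝ)
    (heps : eps = Finset.univ.inf' ⟨⟨0, hk⟩, Finset.mem_univ _⟩
      (acc fun _ => (1 : ℝ) / k))
    (T : Set (Fin k → ℝ))
    (hT : T = {lam | (∀ i, 0 < lam i) ∧ (∑ i, lam i = 1) ∧ ∀ i, eps ≤ acc lam i})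
    (f : (Fin k → ℝ) → ℝ)
    (hf : ∀ lam, f lam
      = Finset.univ.sup' ⟨⟨0, hk⟩, Finset.mem_univ _⟩ (acc lam)
        / Finset.univ.inf' ⟨⟨0, hk⟩, Finset.mem_univ _⟩ (acc lam)) :
    (∀ lamstar ∈ T, (∀ lam ∈ T, f lamstar ≤ f lam) → 1 < f lamstar →
      ∀ g : Fin k → ℝ,
        g = (fun i => if acc lamstar i ≤ Real.sqrt (f lamstar) *
              Finset.univ.inf' ⟨⟨0, hk⟩, Finset.mem_univ _⟩ (acc lamstar)
            then f lamstar ^ ((1 : ℝ) / 4) * lamstar i else lamstar i) →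
        (fun i => g i / ∑ j, g j) ∈ T ∧ f (fun i => g i / ∑ j, g j) < f lamstar)
    ∧ ∃ lam : Fin k → ℝ, (∀ i, 0 < lam i) ∧ (∑ i, lam i = 1) ∧
        ∀ i j, acc lam i = acc lam j := by
  have hYne : (Finset.univ : Finset Y).Nonempty := by
    by_contra h
    rw [Finset.not_nonempty_iff_eq_empty] at h
    have := hLsum ⟨0, hk⟩
    rw [h, Finset.sum_empty] at this
    norm_num at this
  have hkne : (Finset.univ : Finset (Fin k)).Nonempty := ⟨⟨0, hk⟩, Finset.mem_univ _⟩
  have hPostpos : ∀ i v, 0 < Post i v := by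
    intro i v
    rw [hPost]
    have hden : 0 < ∑ j, pri j * L j v :=
      Finset.sum_pos (fun j _ => mul_pos (hpri j) (hL j v)) hkne
    exact div_pos (mul_pos (hpri i) (hL i v)) hden
  have part1 := rdp_aux1 hk L hL hYne Post hPostpos acc hacc eps T hT f hf
  exact ⟨fun lamstar hmem _ hr g hg => part1 lamstar hmem hr g hg,
    rdp_aux2 hk L hL hYne Post hPostpos acc hacc eps heps T hT f hf part1⟩
end

section
/- Let {c1,...,ck} be a partition with a majority class c1 such that Pr(x* ∈ c1) > 1/2, and suppose an algorithm satisfies Symmetric Pairwise Error for all pairs and the measurements cannot perfectly distinguish c1 (so the common RDP accuracy, if RDP held, would be strictly less than 1). Then the algorithm cannot satisfy Representation Demographic Parity. -/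
open MeasureTheory ProbabilityTheory
open scoped ENNReal

/-- SPE and RDP are incompatible in the presence of a majority class: if the partition
has a majority class `c i1` with `Pr(x* ∈ c i1) > 1/2`, the algorithm satisfies
Symmetric Pairwise Error for all pairs of sets, and the measurements cannot perfectly
distinguish the majority class (its conditional accuracy is strictly less than `1`),
then Representation Demographic Parity cannot hold. -/
theorem spe_majority_incompatible_rdp
    {Ω α : Type*} [MeasurableSpace Ω] [MeasurableSpace α]
    (μ : Measure Ω) [IsProbabilityMeasure μ]
    (X Xhat : Ω → α) (hX : Measurable X) (hXhat : Measurable Xhat)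
    {k : ℕ} (c : Fin k → Set α) (hc : ∀ i, MeasurableSet (c i))
    (hdisj : Pairwise (Function.onFun Disjoint c)) (hcover : (⋃ i, c i) = Set.univ)
    (i1 : Fin k) (hmaj : (1 : ℝ≥0∞) / 2 < μ (X ⁻¹' c i1))
    (hSPE : ∀ U V : Set α, MeasurableSet U → MeasurableSet V →
      μ (Xhat ⁻¹' U ∩ X ⁻¹' V) = μ (Xhat ⁻¹' V ∩ X ⁻¹' U))
    (himperfect : μ[Xhat ⁻¹' c i1 | X ⁻¹' c i1] < 1) :
    ¬ (∀ i j, μ[Xhat ⁻¹' c i | X ⁻¹' c i] = μ[Xhat ⁻¹' c j | X ⁻¹' c j]) := by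
  intro hRDP
  set a : ℝ≥0∞ := μ[Xhat ⁻¹' c i1 | X ⁻¹' c i1] with ha
  have ha1 : a ≤ 1 := himperfect.le
  -- accuracy on each class equals `a * μ(X ∈ c j)`
  have hq : ∀ j, μ (X ⁻¹' c j ∩ Xhat ⁻¹' c j) = a * μ (X ⁻¹' c j) := by
    intro j
    rw [← cond_mul_eq_inter (hX (hc j)) (Xhat ⁻¹' c j) μ, hRDP j i1]
  -- splitting any set along the partition
  have hsplit : ∀ A : Set Ω, MeasurableSet A → μ A = ∑ j, μ (A ∩ X ⁻¹' c j) := by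
    intro A hA
    have hAeq : A = ⋃ j, A ∩ X ⁻¹' c j := by
      rw [← Set.inter_iUnion, ← Set.preimage_iUnion, hcover, Set.preimage_univ,
        Set.inter_univ]
    have hd : Pairwise (Function.onFun Disjoint fun j => A ∩ X ⁻¹' c j) := by
      intro i j hij
      exact Disjoint.mono Set.inter_subset_right Set.inter_subset_right
        ((hdisj hij).preimage X)
    conv_lhs => rw [hAeq]
    rw [measure_iUnion hd (fun j => hA.inter (hX (hc j))), tsum_fintype]
  -- PR: μ(Xhat ∈ c i1) = μ(X ∈ c i1)
  have hPR : μ (Xhat ⁻¹' c i1) = μ (X ⁻¹' c i1) := by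
    have h1 := measure_inter_add_diff (μ := μ) (Xhat ⁻¹' c i1) (hX (hc i1))
    have h2 := measure_inter_add_diff (μ := μ) (X ⁻¹' c i1) (hXhat (hc i1))
    have hs := hSPE (c i1) (c i1)ᶜ (hc i1) (hc i1).compl
    rw [Set.preimage_compl, Set.preimage_compl] at hs
    have hd1 : Xhat ⁻¹' c i1 \ X ⁻¹' c i1 = Xhat ⁻¹' c i1 ∩ (X ⁻¹' c i1)ᶜ :=
      Set.diff_eq _ _
    have hd2 : X ⁻¹' c i1 \ Xhat ⁻¹' c i1 = (Xhat ⁻¹' c i1)ᶜ ∩ X ⁻¹' c i1 := by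
      rw [Set.diff_eq, Set.inter_comm]
    rw [← h1, ← h2, hd1, hd2, hs, Set.inter_comm]
  set p : ℝ≥0∞ := μ (X ⁻¹' c i1) with hp
  have hpfin : p ≠ ∞ := measure_ne_top μ _
  -- off-class mass: μ(X ∈ c j \ Xhat ∈ c j) = (1 - a) * μ(X ∈ c j)
  have hs : ∀ j, μ (X ⁻¹' c j \ Xhat ⁻¹' c j) = (1 - a) * μ (X ⁻¹' c j) := by
    intro j
    have h1 := measure_inter_add_diff (μ := μ) (X ⁻¹' c j) (hXhat (hc j))
    rw [hq j] at h1
    have h2 : (1 - a) * μ (X ⁻¹' c j) + a * μ (X ⁻¹' c j) = μ (X ⁻¹' c j) := by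
      rw [← add_mul, tsub_add_cancel_of_le ha1, one_mul]
    have := h1.trans h2.symm
    rw [add_comm (a * μ (X ⁻¹' c j))] at this
    have hfin : a * μ (X ⁻¹' c j) ≠ ∞ :=
      ENNReal.mul_ne_top (lt_of_le_of_lt ha1 ENNReal.one_lt_top).ne (measure_ne_top μ _)
    exact (ENNReal.add_left_inj hfin).mp this
  -- the main inequality: p ≤ a*p + (1-a)*t where t = ∑_{j ≠ i1} μ(X ∈ c j)
  set t : ℝ≥0∞ := ∑ j ∈ Finset.univ.erase i1, μ (X ⁻¹' c j) with ht
  have hpt : p + t = 1 := by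
    have h1 := hsplit Set.univ MeasurableSet.univ
    simp only [Set.univ_inter, measure_univ] at h1
    rw [hp, ht]
    exact (Finset.add_sum_erase Finset.univ (fun x => μ (X ⁻¹' c x))
      (Finset.mem_univ i1)).trans h1.symm
  have hmain : p ≤ a * p + (1 - a) * t := by
    calc p = μ (Xhat ⁻¹' c i1) := hPR.symm
      _ = ∑ j, μ (Xhat ⁻¹' c i1 ∩ X ⁻¹' c j) := hsplit _ (hXhat (hc i1))
      _ = μ (Xhat ⁻¹' c i1 ∩ X ⁻¹' c i1) +
          ∑ j ∈ Finset.univ.erase i1, μ (Xhat ⁻¹' c i1 ∩ X ⁻¹' c j) :=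
        (Finset.add_sum_erase _ _ (Finset.mem_univ i1)).symm
      _ ≤ a * p + ∑ j ∈ Finset.univ.erase i1, (1 - a) * μ (X ⁻¹' c j) := by
        refine add_le_add (le_of_eq ?_) (Finset.sum_le_sum fun j hj => ?_)
        · rw [Set.inter_comm]; exact hq i1
        · rw [← hs j]
          refine measure_mono ?_
          intro x hx
          refine ⟨hx.2, fun hxj => ?_⟩
          exact ((hdisj (Finset.ne_of_mem_erase hj).symm).le_bot ⟨hx.1, hxj⟩)
      _ = a * p + (1 - a) * t := by rw [ht, Finset.mul_sum]
  -- but t < p, so the RHS is < p: contradiction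
  have htp : t < p := by
    have h1 : t = 1 - p := ENNReal.eq_sub_of_add_eq hpfin (by rw [add_comm]; exact hpt)
    have h2 : t ≤ 1 / 2 := by
      rw [h1, tsub_le_iff_right]
      calc (1 : ℝ≥0∞) = 1 / 2 + 1 / 2 := (ENNReal.add_halves 1).symm
        _ ≤ 1 / 2 + p := add_le_add le_rfl hmaj.le
    exact lt_of_le_of_lt h2 hmaj
  have hfinal : a * p + (1 - a) * t < p := by
    have h1 : (1 - a) * t < (1 - a) * p := by
      refine ENNReal.mul_lt_mul_right ?_ ?_ htp
      · exact (tsub_pos_of_lt himperfect).ne'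
      · exact (lt_of_le_of_lt tsub_le_self ENNReal.one_lt_top).ne
    calc a * p + (1 - a) * t < a * p + (1 - a) * p := by
          exact ENNReal.add_lt_add_left
            (ENNReal.mul_ne_top (lt_of_le_of_lt ha1 ENNReal.one_lt_top).ne hpfin) h1
      _ = (a + (1 - a)) * p := (add_mul _ _ _).symm
      _ = p := by rw [add_tsub_cancel_of_le ha1, one_mul]
  exact absurd (lt_of_le_of_lt hmain hfinal) (lt_irrefl p)
end

section
/- In the two-class case {c1, c2}, posterior sampling under the reweighted distribution with λ1 = λ2 = 1/2, i.e. with reweighted posterior P_λ(c_i | y) = P(y | c_i) / (P(y | c1) + P(y | c2)), satisfies Representation Demographic Parity: E_{y | x* ∈ c1}[P_λ(c1 | y)] = E_{y | x* ∈ c2}[P_λ(c2 | y)] for a finite measurement space. -/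
open scoped BigOperators

/-- In the two-class case, posterior sampling under the reweighted distribution with
`λ1 = λ2 = 1/2`, whose reweighted posterior is `P_λ(c_i | y) = P(y|c_i)/(P(y|c1)+P(y|c2))`,
satisfies Representation Demographic Parity: the two per-class accuracies
`E_{y | x* ∈ c_i}[P_λ(c_i | y)]` coincide, for a finite measurement space. -/
theorem two_class_reweighted_rdp
    {Y : Type*} [Fintype Y]
    (L1 L2 : Y → ℝ)
    (hL1 : ∀ y, 0 ≤ L1 y) (hL2 : ∀ y, 0 ≤ L2 y)
    (hL1sum : ∑ y, L1 y = 1) (hL2sum : ∑ y, L2 y = 1)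
    (Plam1 Plam2 : Y → ℝ)
    (hPlam1 : ∀ y, Plam1 y = L1 y / (L1 y + L2 y))
    (hPlam2 : ∀ y, Plam2 y = L2 y / (L1 y + L2 y)) :
    ∑ y, L1 y * Plam1 y = ∑ y, L2 y * Plam2 y := by
  have key : ∀ y, L1 y * Plam1 y - L2 y * Plam2 y = L1 y - L2 y := by
    intro y
    rw [hPlam1, hPlam2]
    by_cases h : L1 y + L2 y = 0
    · have h1 : L1 y = 0 := le_antisymm (by linarith [hL2 y]) (hL1 y)
      have h2 : L2 y = 0 := le_antisymm (by linarith [hL1 y]) (hL2 y)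
      simp [h1, h2]
    · field_simp
      ring
  have : ∑ y, (L1 y * Plam1 y - L2 y * Plam2 y) = 0 := by
    simp only [key]
    rw [Finset.sum_sub_distrib, hL1sum, hL2sum]
    ring
  rw [Finset.sum_sub_distrib] at this
  linarith
end
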